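/- For ν > 0, θ > 0, and y > 0, the Bayes factor g(y, θ) = Γ(ν/2) · e^{−θ/2} · 2^{ν/2−1} · (√(θy))^{1−ν/2} · I_{ν/2−1}(√(θy)) satisfies ∂g/∂y = (α/2) · θ · (√(θy))^{−ν/2} · I_{ν/2}(√(θy)), where α = Γ(ν/2) e^{−θ/2} 2^{ν/2−1}; in particular ∂g/∂y > 0, so g is strictly increasing in y. -/

import Mathlib

/-- Modified Bessel function of the first kind, defined by its power series. -/
noncomputable def besselI (ν z : ℝ) : ℝ :=
  ∑' j : ℕ, (z / 2) ^ (2 * (j : ℝ) + ν) / (Real.Gamma (ν + j + 1) * (Nat.factorial j))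

/-- Bayes factor for the noncentral chi-squared test. -/
noncomputable def bfChiSq (ν θ y : ℝ) : ℝ :=
  Real.Gamma (ν / 2) * Real.exp (-θ / 2) * (2 : ℝ) ^ (ν / 2 - 1) *
    Real.sqrt (θ * y) ^ (1 - ν / 2) * besselI (ν / 2 - 1) (Real.sqrt (θ * y))

/-- Auxiliary entire series. -/
noncomputable def auxF (β x : ℝ) : ℝ :=
  ∑' j : ℕ, x ^ j / (Real.Gamma (β + j) * (Nat.factorial j))

lemma summable_auxF {β : ℝ} (hβ : 0 < β) (x : ℝ) :
    Summable (fun j : ℕ => x ^ j / (Real.Gamma (β + j) * (Nat.factorial j))) := by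
  apply summable_of_ratio_norm_eventually_le (r := 1/2) (by norm_num)
  filter_upwards [Filter.eventually_ge_atTop ⌈2*|x|⌉₊] with j hj
  have hj' : 2*|x| ≤ (j : ℝ) := le_trans (Nat.le_ceil _) (by exact_mod_cast hj)
  have hjn : (0:ℝ) ≤ (j : ℝ) := by positivity
  have hΓ : 0 < Real.Gamma (β + j) := Real.Gamma_pos_of_pos (by positivity)
  have hfac : (0:ℝ) < (Nat.factorial j : ℝ) := by positivity
  have hrec : Real.Gamma (β + ((j:ℕ)+1 : ℕ)) = (β + j) * Real.Gamma (β + j) := by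
    push_cast
    rw [show β + ((j:ℝ)+1) = (β + (j:ℝ)) + 1 by ring,
      Real.Gamma_add_one (by positivity : (0:ℝ) < β + (j:ℝ)).ne']
  have hd1 : (0:ℝ) < Real.Gamma (β + ((j:ℕ)+1:ℕ)) * ((j+1).factorial : ℝ) := by
    rw [hrec]; positivity
  rw [Real.norm_eq_abs, Real.norm_eq_abs, abs_div, abs_div, abs_pow, abs_pow,
    abs_of_pos hd1, abs_of_pos (mul_pos hΓ hfac)]
  rw [hrec, Nat.factorial_succ, pow_succ]
  push_cast
  have key : |x|^j * |x| / ((β+↑j) * Real.Gamma (β+↑j) * ((↑j+1) * ↑j.factorial))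
      = (|x| / ((β+↑j)*(↑j+1))) * (|x|^j / (Real.Gamma (β+↑j) * ↑j.factorial)) := by
    field_simp
  rw [key]
  have hb : |x| / ((β+↑j)*(↑j+1)) ≤ 1/2 := by
    rw [div_le_iff₀ (by positivity)]
    nlinarith [abs_nonneg x, mul_nonneg hjn hjn, mul_nonneg hβ.le hjn]
  exact mul_le_mul_of_nonneg_right hb (by positivity)

lemma summable_bound {β : ℝ} (hβ : 0 < β) {R : ℝ} (hR : 1 ≤ R) :
    Summable (fun j : ℕ => (j:ℝ) * R ^ j / (Real.Gamma (β + j) * (Nat.factorial j))) := by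
  have hR0 : (0:ℝ) < R := by linarith
  apply summable_of_ratio_norm_eventually_le (r := 1/2) (by norm_num)
  filter_upwards [Filter.eventually_ge_atTop (max 1 ⌈2*R⌉₊)] with j hj
  have hj1 : (1:ℝ) ≤ (j:ℝ) := by exact_mod_cast le_trans (le_max_left _ _) hj
  have hjR : 2*R ≤ (j:ℝ) :=
    le_trans (Nat.le_ceil _) (by exact_mod_cast le_trans (le_max_right _ _) hj)
  have hjn : (0:ℝ) ≤ (j : ℝ) := by positivity
  have hΓ : 0 < Real.Gamma (β + j) := Real.Gamma_pos_of_pos (by positivity)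
  have hfac : (0:ℝ) < (Nat.factorial j : ℝ) := by positivity
  have hrec : Real.Gamma (β + ((j:ℕ)+1 : ℕ)) = (β + j) * Real.Gamma (β + j) := by
    push_cast
    rw [show β + ((j:ℝ)+1) = (β + (j:ℝ)) + 1 by ring,
      Real.Gamma_add_one (by positivity : (0:ℝ) < β + (j:ℝ)).ne']
  have hd1 : (0:ℝ) < Real.Gamma (β + ((j:ℕ)+1:ℕ)) * ((j+1).factorial : ℝ) := by
    rw [hrec]; positivity
  rw [Real.norm_eq_abs, Real.norm_eq_abs,
    abs_of_nonneg (by positivity), abs_of_nonneg (by positivity)]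
  rw [hrec, Nat.factorial_succ]
  push_cast
  have key : (↑j+1) * R^(j+1) / ((β+↑j) * Real.Gamma (β+↑j) * ((↑j+1) * ↑j.factorial))
      = (R / (β+↑j)) * (R^j / (Real.Gamma (β+↑j) * ↑j.factorial)) := by
    rw [pow_succ]; field_simp
  have key2 : 1/2 * ((j:ℝ) * R^j / (Real.Gamma (β+↑j) * ↑j.factorial))
      = ((j:ℝ)/2) * (R^j / (Real.Gamma (β+↑j) * ↑j.factorial)) := by ring
  rw [key, key2]
  have hb : R / (β+↑j) ≤ (j:ℝ)/2 := by
    rw [div_le_div_iff₀ (by positivity) (by norm_num)]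
    nlinarith [mul_nonneg hjn hjn, mul_nonneg hβ.le hjn]
  exact mul_le_mul_of_nonneg_right hb (by positivity)

lemma hasDerivAt_auxF {β : ℝ} (hβ : 0 < β) (x : ℝ) :
    HasDerivAt (fun z => auxF β z) (auxF (β+1) x) x := by
  set R : ℝ := |x| + 1 with hRdef
  have hR1 : (1:ℝ) ≤ R := by simp only [hRdef]; linarith [abs_nonneg x]
  have hmem : x ∈ Set.Ioo (-R) R := by
    constructor <;> [nlinarith [neg_abs_le x]; nlinarith [le_abs_self x]]
  have hbound : ∀ (j : ℕ) (z : ℝ), z ∈ Set.Ioo (-R) R →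
      ‖((j:ℝ) * z^(j-1)) / (Real.Gamma (β + j) * (Nat.factorial j))‖
        ≤ (j:ℝ) * R ^ j / (Real.Gamma (β + j) * (Nat.factorial j)) := by
    intro j z hz
    have hΓ : 0 < Real.Gamma (β + j) := Real.Gamma_pos_of_pos (by positivity)
    have hzR : |z| ≤ R := le_of_lt (abs_lt.2 ⟨hz.1, hz.2⟩)
    have hp : |z|^(j-1) ≤ R^j :=
      le_trans (pow_le_pow_left₀ (abs_nonneg z) hzR _) (pow_le_pow_right₀ hR1 (Nat.sub_le j 1))
    rw [Real.norm_eq_abs, abs_div, abs_mul, Nat.abs_cast, abs_pow, abs_mul,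
      abs_of_pos hΓ, Nat.abs_cast]
    gcongr
  have hder := hasDerivAt_tsum_of_isPreconnected
    (u := fun j : ℕ => (j:ℝ) * R ^ j / (Real.Gamma (β + j) * (Nat.factorial j)))
    (g := fun (j:ℕ) z => z ^ j / (Real.Gamma (β + j) * (Nat.factorial j)))
    (g' := fun (j:ℕ) z => ((j:ℝ) * z^(j-1)) / (Real.Gamma (β + j) * (Nat.factorial j)))
    (summable_bound hβ hR1) isOpen_Ioo (convex_Ioo _ _).isPreconnected
    (fun j z _ => (hasDerivAt_pow j z).div_const _)
    hbound hmem (summable_auxF hβ x) hmem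
  have hsum' : Summable (fun j : ℕ =>
      ((j:ℝ) * x^(j-1)) / (Real.Gamma (β + j) * (Nat.factorial j))) :=
    Summable.of_norm_bounded (summable_bound hβ hR1) (fun j => hbound j x hmem)
  have hval : (∑' j : ℕ, ((j:ℝ) * x^(j-1)) / (Real.Gamma (β + j) * (Nat.factorial j)))
      = auxF (β+1) x := by
    rw [hsum'.tsum_eq_zero_add]
    simp only [Nat.cast_zero, zero_mul, zero_div, zero_add]
    rw [auxF]
    apply tsum_congr
    intro k
    have hΓ : 0 < Real.Gamma (β + 1 + k) := Real.Gamma_pos_of_pos (by positivity)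
    have hfac : (0:ℝ) < (Nat.factorial k : ℝ) := by positivity
    rw [Nat.factorial_succ, Nat.add_sub_cancel]
    push_cast
    rw [show β + ((k:ℝ)+1) = β + 1 + (k:ℝ) by ring]
    field_simp
  rw [← hval]
  exact hder

lemma besselI_eq {a : ℝ} (ha : 0 < a + 1) {s : ℝ} (hs : 0 < s) :
    s ^ (-a) * besselI a s = (2:ℝ) ^ (-a) * auxF (a+1) (s^2/4) := by
  rw [besselI, auxF, ← tsum_mul_left, ← tsum_mul_left]
  apply tsum_congr
  intro j
  have hΓ : 0 < Real.Gamma (a + 1 + j) := Real.Gamma_pos_of_pos (by positivity)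
  have hfac : (0:ℝ) < (Nat.factorial j : ℝ) := by positivity
  have hΓe : Real.Gamma (a + ↑j + 1) = Real.Gamma (a + 1 + ↑j) := by
    congr 1; ring
  have h1 : (s/2 : ℝ) ^ (2*(j:ℝ) + a) = (s/2)^(2*j) * (s ^ a / 2 ^ a) := by
    rw [Real.rpow_add (by positivity : (0:ℝ) < s/2),
      show (2*(j:ℝ)) = ((2*j : ℕ) : ℝ) by push_cast; ring,
      Real.rpow_natCast, Real.div_rpow hs.le (by norm_num : (0:ℝ) ≤ 2)]
  have h2 : ((s/2:ℝ))^(2*j) = (s^2/4)^j := by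
    rw [div_pow, div_pow, pow_mul, pow_mul]; norm_num
  rw [h1, h2, hΓe, Real.rpow_neg hs.le, Real.rpow_neg (by norm_num : (0:ℝ) ≤ (2:ℝ))]
  have hsa : (0:ℝ) < s ^ a := Real.rpow_pos_of_pos hs a
  have h2a : (0:ℝ) < (2:ℝ) ^ a := Real.rpow_pos_of_pos (by norm_num) a
  field_simp

lemma bfChiSq_eq {ν θ : ℝ} (hν : 1 ≤ ν) (hθ : 0 < θ) {w : ℝ} (hw : 0 < w) :
    bfChiSq ν θ w = Real.Gamma (ν/2) * Real.exp (-θ/2) * auxF (ν/2) (θ*w/4) := by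
  have hs : 0 < Real.sqrt (θ*w) := Real.sqrt_pos.2 (by positivity)
  have hs2 : Real.sqrt (θ*w) ^ 2 = θ*w := Real.sq_sqrt (by positivity)
  have hkey := besselI_eq (a := ν/2 - 1) (by linarith) hs
  rw [hs2, show (ν/2 - 1) + 1 = ν/2 by ring] at hkey
  have h2c : (2:ℝ)^(ν/2-1) * (2:ℝ)^(-(ν/2-1)) = 1 := by
    rw [← Real.rpow_add (by norm_num : (0:ℝ) < 2)]; norm_num
  rw [bfChiSq, show (1 - ν/2) = -(ν/2 - 1) by ring]
  linear_combination (Real.Gamma (ν/2) * Real.exp (-θ/2) * (2:ℝ)^(ν/2-1)) * hkey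
    + (Real.Gamma (ν/2) * Real.exp (-θ/2) * auxF (ν/2) (θ*w/4)) * h2c

lemma deriv_expr_eq {ν θ : ℝ} (hν : 1 ≤ ν) (hθ : 0 < θ) {y : ℝ} (hy : 0 < y) :
    Real.Gamma (ν / 2) * Real.exp (-θ / 2) * (2 : ℝ) ^ (ν / 2 - 1) / 2 * θ *
      Real.sqrt (θ * y) ^ (-(ν / 2)) * besselI (ν / 2) (Real.sqrt (θ * y))
    = Real.Gamma (ν/2) * Real.exp (-θ/2) * (auxF (ν/2+1) (θ*y/4) * (θ/4)) := by
  have hs : 0 < Real.sqrt (θ*y) := Real.sqrt_pos.2 (by positivity)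
  have hs2 : Real.sqrt (θ*y) ^ 2 = θ*y := Real.sq_sqrt (by positivity)
  have hkey := besselI_eq (a := ν/2) (by linarith) hs
  rw [hs2] at hkey
  have h2c : (2:ℝ)^(ν/2-1) * (2:ℝ)^(-(ν/2)) = 1/2 := by
    rw [← Real.rpow_add (by norm_num : (0:ℝ) < 2),
      show ν/2 - 1 + -(ν/2) = -1 by ring, Real.rpow_neg (by norm_num : (0:ℝ) ≤ 2),
      Real.rpow_one]
    norm_num
  linear_combination (Real.Gamma (ν/2) * Real.exp (-θ/2) * (2:ℝ)^(ν/2-1) / 2 * θ) * hkey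
    + (Real.Gamma (ν/2) * Real.exp (-θ/2) * (θ/2) * auxF (ν/2+1) (θ*y/4)) * h2c

theorem stmt_7 (ν θ : ℝ) (hν : 1 ≤ ν) (hθ : 0 < θ) :
    (∀ y > 0,
      HasDerivAt (fun w => bfChiSq ν θ w)
        (Real.Gamma (ν / 2) * Real.exp (-θ / 2) * (2 : ℝ) ^ (ν / 2 - 1) / 2 * θ *
          Real.sqrt (θ * y) ^ (-(ν / 2)) * besselI (ν / 2) (Real.sqrt (θ * y))) y ∧
      0 < Real.Gamma (ν / 2) * Real.exp (-θ / 2) * (2 : ℝ) ^ (ν / 2 - 1) / 2 * θ *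
          Real.sqrt (θ * y) ^ (-(ν / 2)) * besselI (ν / 2) (Real.sqrt (θ * y))) ∧
    StrictMonoOn (fun y => bfChiSq ν θ y) (Set.Ioi (0 : ℝ)) := by
  have hμ : 0 < ν/2 := by linarith
  have main : ∀ y > 0,
      HasDerivAt (fun w => bfChiSq ν θ w)
        (Real.Gamma (ν / 2) * Real.exp (-θ / 2) * (2 : ℝ) ^ (ν / 2 - 1) / 2 * θ *
          Real.sqrt (θ * y) ^ (-(ν / 2)) * besselI (ν / 2) (Real.sqrt (θ * y))) y ∧
      0 < Real.Gamma (ν / 2) * Real.exp (-θ / 2) * (2 : ℝ) ^ (ν / 2 - 1) / 2 * θ *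
          Real.sqrt (θ * y) ^ (-(ν / 2)) * besselI (ν / 2) (Real.sqrt (θ * y)) := by
    intro y hy
    have hinner : HasDerivAt (fun w : ℝ => θ * w / 4) (θ/4) y := by
      simpa using ((hasDerivAt_id y).const_mul θ).div_const 4
    have hF := (hasDerivAt_auxF hμ (θ*y/4)).comp y hinner
    have hder0 : HasDerivAt (fun w => Real.Gamma (ν/2) * Real.exp (-θ/2) * auxF (ν/2) (θ*w/4))
        (Real.Gamma (ν/2) * Real.exp (-θ/2) * (auxF (ν/2+1) (θ*y/4) * (θ/4))) y :=
      hF.const_mul _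
    have heq : (fun w => bfChiSq ν θ w)
        =ᶠ[nhds y] (fun w => Real.Gamma (ν/2) * Real.exp (-θ/2) * auxF (ν/2) (θ*w/4)) := by
      filter_upwards [Ioi_mem_nhds hy] with w hw using bfChiSq_eq hν hθ hw
    have hder : HasDerivAt (fun w => bfChiSq ν θ w)
        (Real.Gamma (ν/2) * Real.exp (-θ/2) * (auxF (ν/2+1) (θ*y/4) * (θ/4))) y :=
      hder0.congr_of_eventuallyEq heq
    have hexpr := deriv_expr_eq hν hθ hy
    refine ⟨hexpr ▸ hder, ?_⟩
    rw [hexpr]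
    have hFpos : 0 < auxF (ν/2+1) (θ*y/4) := by
      rw [auxF]
      refine Summable.tsum_pos (summable_auxF (by linarith) _) (fun j => ?_) 0 ?_
      · have hΓ := Real.Gamma_pos_of_pos (show (0:ℝ) < ν/2+1+j by positivity)
        positivity
      · have hΓ := Real.Gamma_pos_of_pos (show (0:ℝ) < ν/2+1+(0:ℕ) by positivity)
        positivity
    have hΓν : 0 < Real.Gamma (ν/2) := Real.Gamma_pos_of_pos hμ
    have hE : 0 < Real.exp (-θ/2) := Real.exp_pos _
    positivity
  refine ⟨main, strictMonoOn_of_deriv_pos (convex_Ioi 0) ?_ ?_⟩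
  · intro z hz
    exact ((main z hz).1.continuousAt).continuousWithinAt
  · intro z hz
    rw [interior_Ioi] at hz
    rw [(main z hz).1.deriv]
    exact (main z hz).2
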